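/- Suppose λ ∈ ρ + C, μ ∈ E, and ‖λ − μ‖² = (1/2)·Σ_{α ∈ Δ⁺, (α,μ)=0} (λ,α). Then μ ∈ C and λ = μ + ρ_μ; consequently λ − ρ(λ) = μ − ρ(μ) and also (1/2)·Σ_{α ∈ Δ⁺, (α,μ)=0} (λ,α) = ‖ρ_μ‖², so both inequalities of the theorem are equalities. -/

import Mathlib

open scoped RealInnerProductSpace
open Finset

namespace MagicalAux

variable {E : Type*} [NormedAddCommGroup E] [InnerProductSpace ℝ E]

noncomputable def sr (b x : E) : E := x - (2 * ⟪x, b⟫ / ⟪b, b⟫) • b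

lemma sr_apply (b x : E) : sr b x = x - (2 * ⟪x, b⟫ / ⟪b, b⟫) • b := rfl

lemma sr_adj (b x y : E) : ⟪sr b x, y⟫ = ⟪x, sr b y⟫ := by
  simp only [sr, inner_sub_left, inner_sub_right, real_inner_smul_left, real_inner_smul_right]
  rw [real_inner_comm y b]
  ring

lemma sr_self (b : E) (hb : b ≠ 0) : sr b b = -b := by
  have h : ⟪b, b⟫ ≠ 0 := by
    simpa [inner_self_eq_zero] using hb
  simp only [sr]
  rw [mul_div_assoc, div_self h]
  module

lemma sr_inner (b : E) (hb : b ≠ 0) (x y : E) : ⟪sr b x, sr b y⟫ = ⟪x, y⟫ := by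
  have h : ⟪b, b⟫ ≠ 0 := by simpa [inner_self_eq_zero] using hb
  simp only [sr, inner_sub_left, inner_sub_right, real_inner_smul_left, real_inner_smul_right]
  field_simp
  rw [real_inner_comm y b]
  ring

lemma sr_invol (b : E) (hb : b ≠ 0) (x : E) : sr b (sr b x) = x := by
  have h : ⟪b, b⟫ ≠ 0 := by simpa [inner_self_eq_zero] using hb
  simp only [sr, inner_sub_left, real_inner_smul_left]
  have h2 : 2 * (⟪x, b⟫ - 2 * ⟪x, b⟫ / ⟪b, b⟫ * ⟪b, b⟫) / ⟪b, b⟫ = -(2 * ⟪x, b⟫ / ⟪b, b⟫) := by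
    field_simp; ring
  rw [h2]
  module

lemma sr_norm (b : E) (hb : b ≠ 0) (x : E) : ‖sr b x‖ = ‖x‖ := by
  rw [norm_eq_sqrt_real_inner, norm_eq_sqrt_real_inner, sr_inner b hb]

lemma sr_sum (b : E) (s : Finset E) : sr b (∑ γ ∈ s, γ) = ∑ γ ∈ s, sr b γ := by
  classical
  induction s using Finset.induction_on with
  | empty => simp [sr]
  | insert _ _ h ih =>
    rw [Finset.sum_insert h, Finset.sum_insert h, ← ih]
    simp only [sr, inner_add_left]
    rw [mul_add, add_div, add_smul]
    abel

end MagicalAux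

namespace MagicalAux
variable {E : Type*} [NormedAddCommGroup E] [InnerProductSpace ℝ E]

lemma sr_neg (b x : E) : sr b (-x) = -(sr b x) := by
  simp only [sr, inner_neg_left, mul_neg, neg_div, neg_smul, sub_neg_eq_add]
  abel

end MagicalAux

section KeySum

open MagicalAux

variable {E : Type*} [NormedAddCommGroup E] [InnerProductSpace ℝ E]

/-- The involution/positivity trick: for `b` in the positive system `P` of `R`,
and `Q ⊆ P` stable under `sr b` within `P`, the sum `∑ γ ∈ Q, ⟪γ, b⟫` is nonnegative,
and at least `⟪b,b⟫` if `b ∈ Q`. -/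
lemma key_sum (R Q : Finset E) (u b : E)
    (hR0 : ∀ δ ∈ R, δ ≠ (0 : E))
    (hcl : ∀ b' ∈ R, ∀ x ∈ R, sr b' x ∈ R)
    (hu : ∀ δ ∈ R, ⟪δ, u⟫ ≠ 0)
    (hb : b ∈ R.filter fun δ => 0 < ⟪δ, u⟫)
    (hQ : Q ⊆ R.filter fun δ => 0 < ⟪δ, u⟫)
    (hQcl : ∀ γ ∈ Q, sr b γ ∈ R.filter (fun δ => 0 < ⟪δ, u⟫) → sr b γ ∈ Q) :
    0 ≤ ∑ γ ∈ Q, ⟪γ, b⟫ ∧ (b ∈ Q → ⟪b, b⟫ ≤ ∑ γ ∈ Q, ⟪γ, b⟫) := by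
  classical
  set P := R.filter fun δ => 0 < ⟪δ, u⟫ with hP
  obtain ⟨hbR, hbu⟩ := Finset.mem_filter.mp hb
  have hbne : b ≠ 0 := hR0 b hbR
  have hbb : (0:ℝ) < ⟪b, b⟫ := by
    rw [real_inner_self_eq_norm_sq]; exact pow_pos (norm_pos_iff.mpr hbne) 2
  set Q1 := Q.filter (fun γ => sr b γ ∈ P) with hQ1
  set Q2 := Q.filter (fun γ => ¬ sr b γ ∈ P) with hQ2
  have hsplit : ∑ γ ∈ Q, ⟪γ, b⟫ = (∑ γ ∈ Q1, ⟪γ, b⟫) + ∑ γ ∈ Q2, ⟪γ, b⟫ :=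
    (Finset.sum_filter_add_sum_filter_not Q _ _).symm
  -- Q1 part is zero
  have hQ1zero : ∑ γ ∈ Q1, ⟪γ, b⟫ = 0 := by
    refine Finset.sum_involution (fun γ _ => sr b γ) ?_ ?_ ?_ ?_
    · intro γ hγ
      have : ⟪sr b γ, b⟫ = -⟪γ, b⟫ := by
        rw [sr_adj, sr_self b hbne, inner_neg_right]
      rw [this]; ring
    · intro γ hγ hfne
      intro hcontra
      apply hfne
      have h0 : (2 * ⟪γ, b⟫ / ⟪b, b⟫) • b = 0 := by
        have h1 : γ - (2 * ⟪γ, b⟫ / ⟪b, b⟫) • b = γ := by rw [← sr_apply]; exact hcontra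
        exact sub_eq_self.mp h1
      rcases smul_eq_zero.mp h0 with h | h
      · rcases div_eq_zero_iff.mp h with h2 | h2
        · linarith
        · exact absurd h2 (ne_of_gt hbb)
      · exact absurd h hbne
    · intro γ hγ
      obtain ⟨hγQ, hγP⟩ := Finset.mem_filter.mp hγ
      have h1 : sr b γ ∈ Q := hQcl γ hγQ hγP
      refine Finset.mem_filter.mpr ⟨h1, ?_⟩
      rw [sr_invol b hbne]
      exact hQ hγQ
    · intro γ hγ
      exact sr_invol b hbne γ
  -- Q2 terms are positive
  have hQ2pos : ∀ γ ∈ Q2, 0 < ⟪γ, b⟫ := by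
    intro γ hγ
    obtain ⟨hγQ, hγnP⟩ := Finset.mem_filter.mp hγ
    obtain ⟨hγR, hγu⟩ := Finset.mem_filter.mp (hQ hγQ)
    have hsrR : sr b γ ∈ R := hcl b hbR γ hγR
    have hsru : ⟪sr b γ, u⟫ < 0 := by
      rcases lt_or_gt_of_ne (hu _ hsrR) with h | h
      · exact h
      · exact absurd (Finset.mem_filter.mpr ⟨hsrR, h⟩) hγnP
    rw [sr_apply, inner_sub_left, real_inner_smul_left] at hsru
    by_contra hle
    push_neg at hle
    have hc : 2 * ⟪γ, b⟫ / ⟪b, b⟫ ≤ 0 := by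
      apply div_nonpos_of_nonpos_of_nonneg <;> nlinarith
    nlinarith
  constructor
  · rw [hsplit, hQ1zero, zero_add]
    exact Finset.sum_nonneg fun γ hγ => le_of_lt (hQ2pos γ hγ)
  · intro hbQ
    have hbQ2 : b ∈ Q2 := by
      refine Finset.mem_filter.mpr ⟨hbQ, ?_⟩
      rw [sr_self b hbne]
      intro hmem
      obtain ⟨h1, h2⟩ := Finset.mem_filter.mp hmem
      rw [inner_neg_left] at h2
      linarith
    rw [hsplit, hQ1zero, zero_add]
    exact Finset.single_le_sum (fun γ hγ => le_of_lt (hQ2pos γ hγ)) hbQ2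
end KeySum

section Indec

open MagicalAux

variable {E : Type*} [NormedAddCommGroup E] [InnerProductSpace ℝ E]

lemma indecomp_refl (Δ : Finset E) (hΔ0 : (0 : E) ∉ Δ)
    (hΔred : ∀ α ∈ Δ, ∀ t : ℝ, t • α ∈ Δ → t = 1 ∨ t = -1)
    (hΔcrys : ∀ α ∈ Δ, ∀ β ∈ Δ, ∃ n : ℤ, 2 * ⟪β, α⟫ / ⟪α, α⟫ = (n : ℝ))
    (R : Finset E) (hRΔ : R ⊆ Δ)
    (hcl : ∀ b ∈ R, ∀ x ∈ R, sr b x ∈ R)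
    (u : E) (hu : ∀ δ ∈ R, ⟪δ, u⟫ ≠ 0)
    (δ : E) (hδ : δ ∈ R.filter fun γ => 0 < ⟪γ, u⟫)
    (hind : ∀ γ1 ∈ R.filter (fun γ => 0 < ⟪γ, u⟫), ∀ γ2 ∈ R.filter (fun γ => 0 < ⟪γ, u⟫),
      δ ≠ γ1 + γ2) :
    ∀ γ ∈ R.filter (fun γ => 0 < ⟪γ, u⟫), γ ≠ δ → sr δ γ ∈ R.filter (fun γ => 0 < ⟪γ, u⟫) := by
  classical
  have hnegR : ∀ x ∈ R, -x ∈ R := by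
    intro x hx
    have hxne : x ≠ 0 := fun h => hΔ0 (h ▸ hRΔ hx)
    have := hcl x hx x hx
    rwa [sr_self x hxne] at this
  obtain ⟨hδR, hδu⟩ := Finset.mem_filter.mp hδ
  have hδne : δ ≠ 0 := fun h => hΔ0 (h ▸ hRΔ hδR)
  have hk : (0:ℝ) < ⟪δ, δ⟫ := by
    rw [real_inner_self_eq_norm_sq]; exact pow_pos (norm_pos_iff.mpr hδne) 2
  intro γ hγP hne
  obtain ⟨hγR, hγu⟩ := Finset.mem_filter.mp hγP
  have hγne : γ ≠ 0 := fun h => hΔ0 (h ▸ hRΔ hγR)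
  have hkγ : (0:ℝ) < ⟪γ, γ⟫ := by
    rw [real_inner_self_eq_norm_sq]; exact pow_pos (norm_pos_iff.mpr hγne) 2
  by_contra hnP
  have hsrR : sr δ γ ∈ R := hcl δ hδR γ hγR
  have hsru : ⟪sr δ γ, u⟫ < 0 := by
    rcases lt_or_gt_of_ne (hu _ hsrR) with h | h
    · exact h
    · exact absurd (Finset.mem_filter.mpr ⟨hsrR, h⟩) hnP
  set c : ℝ := 2 * ⟪γ, δ⟫ / ⟪δ, δ⟫ with hc
  have hγ'R : c • δ - γ ∈ R := by
    have := hnegR _ hsrR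
    rw [sr_apply, neg_sub] at this
    exact this
  have hγ'u : 0 < ⟪c • δ - γ, u⟫ := by
    have h7 : ⟪c • δ - γ, u⟫ = -⟪sr δ γ, u⟫ := by
      rw [sr_apply, ← inner_neg_left]; congr 1; abel
    rw [h7]; linarith
  have hγ'P : c • δ - γ ∈ R.filter fun γ => 0 < ⟪γ, u⟫ :=
    Finset.mem_filter.mpr ⟨hγ'R, hγ'u⟩
  have hcsum : c * ⟪δ, u⟫ = ⟪γ, u⟫ + ⟪c • δ - γ, u⟫ := by
    rw [inner_sub_left, real_inner_smul_left]; ring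
  have hcpos : 0 < c := by
    have h1 : 0 < c * ⟪δ, u⟫ := by rw [hcsum]; positivity
    by_contra hcle
    push_neg at hcle
    have h2 : c * ⟪δ, u⟫ ≤ 0 := mul_nonpos_of_nonpos_of_nonneg hcle (le_of_lt hδu)
    linarith
  obtain ⟨n, hn⟩ := hΔcrys δ (hRΔ hδR) γ (hRΔ hγR)
  obtain ⟨m, hm⟩ := hΔcrys γ (hRΔ hγR) δ (hRΔ hδR)
  rw [real_inner_comm γ δ] at hm
  -- hn : 2 * ⟪γ, δ⟫ / ⟪δ, δ⟫ = n,  hm : 2 * ⟪γ, δ⟫ / ⟪γ, γ⟫ = m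
  have hgd : 0 < ⟪γ, δ⟫ := by
    have h0 : 0 < 2 * ⟪γ, δ⟫ / ⟪δ, δ⟫ := hc ▸ hcpos
    have h5 : 2 * ⟪γ, δ⟫ / ⟪δ, δ⟫ * ⟪δ, δ⟫ = 2 * ⟪γ, δ⟫ :=
      div_mul_cancel₀ _ (ne_of_gt hk)
    have h6 := mul_pos h0 hk
    linarith
  have h2n : 2 * ⟪γ, δ⟫ = (n : ℝ) * ⟪δ, δ⟫ := by
    field_simp at hn; linarith
  have h2m : 2 * ⟪γ, δ⟫ = (m : ℝ) * ⟪γ, γ⟫ := by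
    field_simp at hm; linarith
  have hn1 : 1 ≤ n := by
    have h0 : (0:ℝ) < (n:ℝ) := by rw [← hn]; exact div_pos (by linarith) hk
    have : 0 < n := by exact_mod_cast h0
    omega
  have hm1 : 1 ≤ m := by
    have h0 : (0:ℝ) < (m:ℝ) := by rw [← hm]; exact div_pos (by linarith) hkγ
    have : 0 < m := by exact_mod_cast h0
    omega
  have hCS : ⟪γ, δ⟫ * ⟪γ, δ⟫ ≤ ⟪γ, γ⟫ * ⟪δ, δ⟫ := real_inner_mul_inner_self_le γ δ
  have hnm : n * m ≤ 4 := by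
    have hprod : ((n:ℝ) * m) * (⟪δ, δ⟫ * ⟪γ, γ⟫) = (2 * ⟪γ, δ⟫) * (2 * ⟪γ, δ⟫) := by
      linear_combination (-((m:ℝ) * ⟪γ, γ⟫)) * h2n + (-(2 * ⟪γ, δ⟫)) * h2m
    have h4' : ((n:ℝ) * m) * (⟪δ, δ⟫ * ⟪γ, γ⟫) ≤ 4 * (⟪δ, δ⟫ * ⟪γ, γ⟫) := by
      rw [hprod]; nlinarith [hCS]
    have h4 : ((n:ℝ) * m) ≤ 4 := le_of_mul_le_mul_right h4' (mul_pos hk hkγ)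
    exact_mod_cast h4
  have hceq : c = (n : ℝ) := hn
  have hn4 : n ≤ 4 := by
    calc n = n * 1 := (mul_one n).symm
    _ ≤ n * m := by exact mul_le_mul_of_nonneg_left hm1 (by omega)
    _ ≤ 4 := hnm
  have hdec : ∀ x1 ∈ R.filter (fun γ => 0 < ⟪γ, u⟫), ∀ x2 ∈ R.filter (fun γ => 0 < ⟪γ, u⟫),
      x1 + x2 = δ → False := by
    intro x1 h1 x2 h2 hsum
    exact hind x1 h1 x2 h2 hsum.symm
  interval_cases n
  · -- n = 1 : δ = γ + (c•δ - γ)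
    refine hdec γ hγP (c • δ - γ) hγ'P ?_
    rw [hceq]; push_cast; rw [one_smul]; abel
  · -- n = 2
    have hm2 : m = 1 ∨ m = 2 := by omega
    rcases hm2 with hm2 | hm2
    · -- m = 1 : η := γ - δ
      subst hm2
      have hsrγδ : sr γ δ = δ - γ := by
        rw [sr_apply, real_inner_comm γ δ]
        have h8 : 2 * ⟪γ, δ⟫ / ⟪γ, γ⟫ = 1 := by rw [hm]; norm_num
        rw [h8, one_smul]
      have hηR : γ - δ ∈ R := by
        have := hnegR _ (hcl γ hγR δ hδR)
        rw [hsrγδ, neg_sub] at this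
        exact this
      rcases lt_or_gt_of_ne (hu _ hηR) with hηneg | hηpos
      · -- δ - γ ∈ P, δ = γ + (δ - γ)
        have hmem : δ - γ ∈ R.filter fun γ => 0 < ⟪γ, u⟫ := by
          refine Finset.mem_filter.mpr ⟨by simpa [neg_sub] using hnegR _ hηR, ?_⟩
          rw [show δ - γ = -(γ - δ) by abel, inner_neg_left]; linarith
        exact hdec γ hγP (δ - γ) hmem (by abel)
      · -- η ∈ P, δ = (2•δ - γ) + η
        have hmem : γ - δ ∈ R.filter fun γ => 0 < ⟪γ, u⟫ :=
          Finset.mem_filter.mpr ⟨hηR, hηpos⟩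
        refine hdec (c • δ - γ) hγ'P (γ - δ) hmem ?_
        rw [hceq]; push_cast; rw [two_smul]; abel
    · -- m = 2, n = 2 : γ = δ
      subst hm2
      exfalso
      apply hne
      have hz : ⟪γ - δ, γ - δ⟫ = (0:ℝ) := by
        rw [inner_sub_left, inner_sub_right, inner_sub_right, real_inner_comm γ δ]
        push_cast at h2n h2m
        linarith
      exact sub_eq_zero.mp (inner_self_eq_zero.mp hz)
  · -- n = 3, m = 1
    have hm3 : m = 1 := by omega
    subst hm3
    have hsrγδ : sr γ δ = δ - γ := by
      rw [sr_apply, real_inner_comm γ δ]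
      have h8 : 2 * ⟪γ, δ⟫ / ⟪γ, γ⟫ = 1 := by rw [hm]; norm_num
      rw [h8, one_smul]
    have hηR : γ - δ ∈ R := by
      have := hnegR _ (hcl γ hγR δ hδR)
      rw [hsrγδ, neg_sub] at this
      exact this
    rcases lt_or_gt_of_ne (hu _ hηR) with hηneg | hηpos
    · have hmem : δ - γ ∈ R.filter fun γ => 0 < ⟪γ, u⟫ := by
        refine Finset.mem_filter.mpr ⟨by simpa [neg_sub] using hnegR _ hηR, ?_⟩
        rw [show δ - γ = -(γ - δ) by abel, inner_neg_left]; linarith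
      exact hdec γ hγP (δ - γ) hmem (by abel)
    · -- η = γ - δ ∈ P; ζ := δ - η ∈ R via sr η δ
      push_cast at h2n h2m
      have hγγ : ⟪γ, γ⟫ = 3 * ⟪δ, δ⟫ := by linarith
      have hηη : ⟪γ - δ, γ - δ⟫ = ⟪δ, δ⟫ := by
        rw [inner_sub_left, inner_sub_right, inner_sub_right, real_inner_comm γ δ]
        linarith
      have hδη : ⟪δ, γ - δ⟫ = ⟪δ, δ⟫ / 2 := by
        rw [inner_sub_right, real_inner_comm γ δ]
        linarith
      have hsrηδ : sr (γ - δ) δ = δ - (γ - δ) := by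
        rw [sr_apply, hηη, hδη]
        have h9 : 2 * (⟪δ, δ⟫ / 2) / ⟪δ, δ⟫ = 1 := by field_simp
        rw [h9, one_smul]
      have hζR : δ - (γ - δ) ∈ R := by
        have := hcl (γ - δ) hηR δ hδR
        rwa [hsrηδ] at this
      rcases lt_or_gt_of_ne (hu _ hζR) with hζneg | hζpos
      · -- -ζ ∈ P ; δ = (3δ - γ) + (γ - 2δ)
        have hmem : -(δ - (γ - δ)) ∈ R.filter fun γ => 0 < ⟪γ, u⟫ := by
          refine Finset.mem_filter.mpr ⟨hnegR _ hζR, ?_⟩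
          rw [inner_neg_left]; linarith
        refine hdec (c • δ - γ) hγ'P (-(δ - (γ - δ))) hmem ?_
        rw [hceq]
        push_cast
        rw [show (3:ℝ) • δ = δ + δ + δ by
          rw [show (3:ℝ) = 2 + 1 by norm_num, add_smul, two_smul, one_smul]]
        abel
      · -- ζ ∈ P ; δ = η + ζ
        have hmemη : γ - δ ∈ R.filter fun γ => 0 < ⟪γ, u⟫ :=
          Finset.mem_filter.mpr ⟨hηR, hηpos⟩
        have hmemζ : δ - (γ - δ) ∈ R.filter fun γ => 0 < ⟪γ, u⟫ :=
          Finset.mem_filter.mpr ⟨hζR, hζpos⟩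
        exact hdec (γ - δ) hmemη (δ - (γ - δ)) hmemζ (by abel)
  · -- n = 4, m = 1 : γ = 2δ contradiction with reducedness
    have hm4 : m = 1 := by omega
    subst hm4
    push_cast at h2n h2m
    have hz : ⟪γ - (2:ℝ) • δ, γ - (2:ℝ) • δ⟫ = (0:ℝ) := by
      simp only [inner_sub_left, inner_sub_right, real_inner_smul_left, real_inner_smul_right]
      rw [real_inner_comm γ δ]
      linarith
    have hγ2δ : γ = (2:ℝ) • δ := sub_eq_zero.mp (inner_self_eq_zero.mp hz)
    rcases hΔred δ (hRΔ hδR) 2 (hγ2δ ▸ hRΔ hγR) with h | h <;> norm_num at h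

end Indec

section NormEq

open MagicalAux

variable {E : Type*} [NormedAddCommGroup E] [InnerProductSpace ℝ E]

lemma rho_norm_eq [DecidableEq E] (Δ : Finset E) (hΔ0 : (0 : E) ∉ Δ)
    (hΔred : ∀ α ∈ Δ, ∀ t : ℝ, t • α ∈ Δ → t = 1 ∨ t = -1)
    (hΔcrys : ∀ α ∈ Δ, ∀ β ∈ Δ, ∃ n : ℤ, 2 * ⟪β, α⟫ / ⟪α, α⟫ = (n : ℝ)) :
    ∀ n : ℕ, ∀ R : Finset E, R ⊆ Δ → (∀ b ∈ R, ∀ x ∈ R, sr b x ∈ R) →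
    ∀ u1 u2 : E, (∀ δ ∈ R, ⟪δ, u1⟫ ≠ 0) → (∀ δ ∈ R, ⟪δ, u2⟫ ≠ 0) →
    ((R.filter fun δ => 0 < ⟪δ, u1⟫) \ (R.filter fun δ => 0 < ⟪δ, u2⟫)).card = n →
    ‖∑ δ ∈ R.filter fun δ => 0 < ⟪δ, u1⟫, δ‖ = ‖∑ δ ∈ R.filter fun δ => 0 < ⟪δ, u2⟫, δ‖ := by
  classical
  intro n
  induction n using Nat.strong_induction_on with
  | _ n ih =>
    intro R hRΔ hcl u1 u2 h1 h2 hcard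
    have hnegR : ∀ x ∈ R, -x ∈ R := by
      intro x hx
      have hxne : x ≠ 0 := fun h => hΔ0 (h ▸ hRΔ hx)
      have := hcl x hx x hx
      rwa [sr_self x hxne] at this
    set P1 := R.filter fun δ => 0 < ⟪δ, u1⟫ with hP1def
    set P2 := R.filter fun δ => 0 < ⟪δ, u2⟫ with hP2def
    by_cases hempty : P1 \ P2 = ∅
    · have hsub : P1 ⊆ P2 := Finset.sdiff_eq_empty_iff_subset.mp hempty
      have heq12 : P1 = P2 := by
        apply Finset.Subset.antisymm hsub
        intro γ hγ2
        obtain ⟨hγR, hγu2⟩ := Finset.mem_filter.mp hγ2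
        by_contra hγn1
        have hγu1 : ⟪γ, u1⟫ < 0 := by
          rcases lt_or_gt_of_ne (h1 γ hγR) with h | h
          · exact h
          · exact absurd (Finset.mem_filter.mpr ⟨hγR, h⟩) hγn1
        have hnegγ : -γ ∈ P1 := Finset.mem_filter.mpr ⟨hnegR γ hγR, by
          rw [inner_neg_left]; linarith⟩
        have := Finset.mem_filter.mp (hsub hnegγ)
        rw [inner_neg_left] at this
        linarith [this.2]
      rw [heq12]
    · obtain ⟨δ, hδD, hδmin⟩ :=
        Finset.exists_min_image (P1 \ P2) (fun γ => ⟪γ, u1⟫)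
          (Finset.nonempty_of_ne_empty hempty)
      obtain ⟨hδP1, hδnP2⟩ := Finset.mem_sdiff.mp hδD
      obtain ⟨hδR, hδu1⟩ := Finset.mem_filter.mp hδP1
      have hδne : δ ≠ 0 := fun h => hΔ0 (h ▸ hRΔ hδR)
      have hδu2 : ⟪δ, u2⟫ < 0 := by
        rcases lt_or_gt_of_ne (h2 δ hδR) with h | h
        · exact h
        · exact absurd (Finset.mem_filter.mpr ⟨hδR, h⟩) hδnP2
      -- indecomposability of δ in P1
      have hind : ∀ γ1 ∈ P1, ∀ γ2 ∈ P1, δ ≠ γ1 + γ2 := by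
        intro γ1 hγ1 γ2 hγ2 heqd
        obtain ⟨hγ1R, hγ1u1⟩ := Finset.mem_filter.mp hγ1
        obtain ⟨hγ2R, hγ2u1⟩ := Finset.mem_filter.mp hγ2
        have hsum2 : ⟪γ1, u2⟫ + ⟪γ2, u2⟫ < 0 := by
          rw [heqd, inner_add_left] at hδu2; exact hδu2
        have hsum1 : ⟪δ, u1⟫ = ⟪γ1, u1⟫ + ⟪γ2, u1⟫ := by
          rw [heqd, inner_add_left]
        have hone : ⟪γ1, u2⟫ < 0 ∨ ⟪γ2, u2⟫ < 0 := by
          by_contra hcon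
          push_neg at hcon
          linarith [hcon.1, hcon.2]
        rcases hone with hbad | hbad
        · have hmem : γ1 ∈ P1 \ P2 := Finset.mem_sdiff.mpr ⟨hγ1, fun hmem => by
            have := (Finset.mem_filter.mp hmem).2; linarith⟩
          have := hδmin γ1 hmem
          linarith
        · have hmem : γ2 ∈ P1 \ P2 := Finset.mem_sdiff.mpr ⟨hγ2, fun hmem => by
            have := (Finset.mem_filter.mp hmem).2; linarith⟩
          have := hδmin γ2 hmem
          linarith
      have hrefl := indecomp_refl Δ hΔ0 hΔred hΔcrys R hRΔ hcl u1 h1 δ hδP1 hind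
      -- the reflected functional
      set u1' := sr δ u1 with hu1'def
      have hadj : ∀ γ : E, ⟪γ, u1'⟫ = ⟪sr δ γ, u1⟫ := fun γ => (sr_adj δ γ u1).symm
      have h1' : ∀ γ ∈ R, ⟪γ, u1'⟫ ≠ 0 := by
        intro γ hγ
        rw [hadj]
        exact h1 _ (hcl δ hδR γ hγ)
      set P1' := R.filter fun δ' => 0 < ⟪δ', u1'⟫ with hP1'def
      have hmemP1' : ∀ γ, γ ∈ P1' ↔ (γ ∈ R ∧ sr δ γ ∈ P1) := by
        intro γ
        constructor
        · intro h
          obtain ⟨hγR, hγu⟩ := Finset.mem_filter.mp h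
          rw [hadj] at hγu
          exact ⟨hγR, Finset.mem_filter.mpr ⟨hcl δ hδR γ hγR, hγu⟩⟩
        · rintro ⟨hγR, hs⟩
          exact Finset.mem_filter.mpr ⟨hγR, by rw [hadj]; exact (Finset.mem_filter.mp hs).2⟩
      have hsrδδ : sr δ δ = -δ := sr_self δ hδne
      have hnegδP2 : -δ ∈ P2 := Finset.mem_filter.mpr ⟨hnegR δ hδR, by
        rw [inner_neg_left]; linarith⟩
      have hnegδP1 : -δ ∉ P1 := by
        intro hmem
        have := (Finset.mem_filter.mp hmem).2
        rw [inner_neg_left] at this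
        linarith
      have hP1'eq : P1' = insert (-δ) (P1.erase δ) := by
        ext γ
        rw [hmemP1', Finset.mem_insert, Finset.mem_erase]
        constructor
        · rintro ⟨hγR, hs⟩
          by_cases hγδ : γ = -δ
          · exact Or.inl hγδ
          · refine Or.inr ⟨?_, ?_⟩
            · intro hγeq
              subst hγeq
              rw [hsrδδ] at hs
              exact hnegδP1 hs
            · have hsne : sr δ γ ≠ δ := by
                intro hcon
                apply hγδ
                have := congrArg (sr δ) hcon
                rwa [sr_invol δ hδne, hsrδδ] at this
              have := hrefl (sr δ γ) hs hsne
              rwa [sr_invol δ hδne] at this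
        · rintro (hγeq | ⟨hγne, hγP1⟩)
          · subst hγeq
            refine ⟨hnegR δ hδR, ?_⟩
            rw [sr_neg, hsrδδ, neg_neg]
            exact hδP1
          · exact ⟨(Finset.mem_filter.mp hγP1).1, hrefl γ hγP1 hγne⟩
      -- cardinality decreases
      have hn1 : 1 ≤ n := by
        rw [← hcard]
        exact Finset.card_pos.mpr ⟨δ, hδD⟩
      have hcard' : (P1' \ P2).card = n - 1 := by
        have hset : P1' \ P2 = (P1 \ P2).erase δ := by
          rw [hP1'eq]
          ext γ
          simp only [Finset.mem_sdiff, Finset.mem_insert, Finset.mem_erase]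
          constructor
          · rintro ⟨hin, hout⟩
            rcases hin with hγeq | ⟨hγne, hγP1⟩
            · exact absurd (hγeq ▸ hnegδP2) hout
            · exact ⟨hγne, hγP1, hout⟩
          · rintro ⟨hγne, hγP1, hout⟩
            exact ⟨Or.inr ⟨hγne, hγP1⟩, hout⟩
        rw [hset, Finset.card_erase_of_mem hδD, hcard]
      -- sums are related by the reflection
      have hsum' : ∑ γ ∈ P1', γ = sr δ (∑ γ ∈ P1, γ) := by
        rw [sr_sum]
        refine Finset.sum_bij' (fun γ _ => sr δ γ) (fun γ _ => sr δ γ) ?_ ?_ ?_ ?_ ?_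
        · intro γ hγ
          exact ((hmemP1' γ).mp hγ).2
        · intro γ hγ
          refine (hmemP1' (sr δ γ)).mpr ⟨hcl δ hδR γ (Finset.mem_filter.mp hγ).1, ?_⟩
          rw [sr_invol δ hδne]
          exact hγ
        · intro γ hγ
          exact sr_invol δ hδne γ
        · intro γ hγ
          exact sr_invol δ hδne γ
        · intro γ hγ
          exact (sr_invol δ hδne γ).symm
      have hih := ih (n - 1) (by omega) R hRΔ hcl u1' u2 h1' h2 hcard'
      calc ‖∑ δ' ∈ P1, δ'‖ = ‖sr δ (∑ δ' ∈ P1, δ')‖ := (sr_norm δ hδne _).symm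
      _ = ‖∑ δ' ∈ P1', δ'‖ := by rw [hsum']
      _ = ‖∑ δ' ∈ P2, δ'‖ := hih

end NormEq

section Mag

open MagicalAux

variable {E : Type*} [NormedAddCommGroup E] [InnerProductSpace ℝ E]

lemma lam_pos_aux (Δ : Finset E) (hΔ0 : (0 : E) ∉ Δ)
    (hΔrefl : ∀ α ∈ Δ, ∀ β ∈ Δ, β - (2 * ⟪β, α⟫ / ⟪α, α⟫) • α ∈ Δ)
    (v : E) (hv : ∀ α ∈ Δ, ⟪α, v⟫ ≠ 0)
    (ρ : E) (hρ : ρ = (2 : ℝ)⁻¹ • ∑ α ∈ Δ.filter (fun α => 0 < ⟪α, v⟫), α)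
    (lam : E) (hlam : ∀ α ∈ Δ.filter (fun α => 0 < ⟪α, v⟫), 0 ≤ ⟪lam - ρ, α⟫) :
    ∀ β ∈ Δ.filter (fun α => 0 < ⟪α, v⟫), 0 < ⟪lam, β⟫ ∧ 0 < ⟪ρ, β⟫ := by
  classical
  have hR0 : ∀ δ ∈ Δ, δ ≠ (0:E) := fun δ hδ h => hΔ0 (h ▸ hδ)
  have hcl : ∀ b ∈ Δ, ∀ x ∈ Δ, sr b x ∈ Δ := fun b hb x hx => hΔrefl b hb x hx
  intro β hβ
  have hββ : (0:ℝ) < ⟪β, β⟫ := by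
    rw [real_inner_self_eq_norm_sq]
    exact pow_pos (norm_pos_iff.mpr (hR0 β (Finset.mem_filter.mp hβ).1)) 2
  have hks := (key_sum Δ (Δ.filter fun α => 0 < ⟪α, v⟫) v β hR0 hcl hv hβ
    (Finset.Subset.refl _) (fun γ _ h => h)).2 hβ
  have hsum : ⟪ρ, β⟫ = (2:ℝ)⁻¹ * ∑ γ ∈ Δ.filter (fun α => 0 < ⟪α, v⟫), ⟪γ, β⟫ := by
    rw [hρ, real_inner_smul_left, sum_inner]
  have hρβ : 0 < ⟪ρ, β⟫ := by
    rw [hsum]; nlinarith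
  have hlamβ : 0 < ⟪lam, β⟫ := by
    have h1 := hlam β hβ
    rw [inner_sub_left] at h1
    linarith
  exact ⟨hlamβ, hρβ⟩

lemma mag_inner_aux (Δ : Finset E) (hΔ0 : (0 : E) ∉ Δ)
    (hΔrefl : ∀ α ∈ Δ, ∀ β ∈ Δ, β - (2 * ⟪β, α⟫ / ⟪α, α⟫) • α ∈ Δ)
    (v : E) (hv : ∀ α ∈ Δ, ⟪α, v⟫ ≠ 0)
    (ρ : E) (hρ : ρ = (2 : ℝ)⁻¹ • ∑ α ∈ Δ.filter (fun α => 0 < ⟪α, v⟫), α)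
    (lam : E) (hlam : ∀ α ∈ Δ.filter (fun α => 0 < ⟪α, v⟫), 0 ≤ ⟪lam - ρ, α⟫)
    (m : E) :
    ‖(2:ℝ)⁻¹ • ∑ α ∈ (Δ.filter (fun α => 0 < ⟪α, v⟫)).filter (fun α => ⟪α, m⟫ = 0), α‖ ^ 2 ≤
      ⟪lam, (2:ℝ)⁻¹ • ∑ α ∈ (Δ.filter (fun α => 0 < ⟪α, v⟫)).filter (fun α => ⟪α, m⟫ = 0), α⟫ := by
  classical
  have hR0 : ∀ δ ∈ Δ, δ ≠ (0:E) := fun δ hδ h => hΔ0 (h ▸ hδ)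
  have hcl : ∀ b ∈ Δ, ∀ x ∈ Δ, sr b x ∈ Δ := fun b hb x hx => hΔrefl b hb x hx
  set P := Δ.filter (fun α => 0 < ⟪α, v⟫) with hP
  set S := P.filter (fun α => ⟪α, m⟫ = 0) with hS
  set Q := P.filter (fun α => ¬ ⟪α, m⟫ = 0) with hQ
  set rm : E := (2:ℝ)⁻¹ • ∑ α ∈ S, α with hrm
  -- Claim A + positivity of lam gives: each term ⟪lam - rm, α⟫ is nonneg for α ∈ S
  have hB : ∀ α ∈ S, 0 ≤ ⟪lam - rm, α⟫ := by
    intro α hα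
    obtain ⟨hαP, hαm⟩ := Finset.mem_filter.mp hα
    have hQcl : ∀ γ ∈ Q, sr α γ ∈ P → sr α γ ∈ Q := by
      intro γ hγ hmem
      obtain ⟨hγP, hγm⟩ := Finset.mem_filter.mp hγ
      refine Finset.mem_filter.mpr ⟨hmem, ?_⟩
      rw [sr_apply, inner_sub_left, real_inner_smul_left, hαm]
      simpa using hγm
    have hkey := (key_sum Δ Q v α hR0 hcl hv hαP (Finset.filter_subset _ _) hQcl).1
    have hsplit : (∑ γ ∈ S, γ) + (∑ γ ∈ Q, γ) = ∑ γ ∈ P, γ :=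
      Finset.sum_filter_add_sum_filter_not P _ _
    have hρrm : ρ - rm = (2:ℝ)⁻¹ • ∑ γ ∈ Q, γ := by
      rw [hρ, hrm, ← smul_sub]
      congr 1
      rw [← hsplit]
      abel
    have hρrmα : 0 ≤ ⟪ρ - rm, α⟫ := by
      rw [hρrm, real_inner_smul_left, sum_inner]
      positivity
    have hdecomp : ⟪lam - rm, α⟫ = ⟪lam - ρ, α⟫ + ⟪ρ - rm, α⟫ := by
      rw [← inner_add_left]
      congr 1
      abel
    rw [hdecomp]
    have := hlam α hαP
    linarith
  have hBB : 0 ≤ ⟪lam - rm, rm⟫ := by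
    rw [hrm, real_inner_smul_right, inner_sum]
    have : 0 ≤ ∑ α ∈ S, ⟪lam - rm, α⟫ := Finset.sum_nonneg fun α hα => by
      have := hB α hα; rw [hrm] at this ⊢; exact this
    positivity
  have hexp : ⟪lam - rm, rm⟫ = ⟪lam, rm⟫ - ‖rm‖ ^ 2 := by
    rw [inner_sub_left, real_inner_self_eq_norm_sq]
  linarith [hexp ▸ hBB]

lemma mag_ge_aux (Δ : Finset E) (hΔ0 : (0 : E) ∉ Δ)
    (hΔrefl : ∀ α ∈ Δ, ∀ β ∈ Δ, β - (2 * ⟪β, α⟫ / ⟪α, α⟫) • α ∈ Δ)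
    (v : E) (hv : ∀ α ∈ Δ, ⟪α, v⟫ ≠ 0)
    (ρ : E) (hρ : ρ = (2 : ℝ)⁻¹ • ∑ α ∈ Δ.filter (fun α => 0 < ⟪α, v⟫), α)
    (lam : E) (hlam : ∀ α ∈ Δ.filter (fun α => 0 < ⟪α, v⟫), 0 ≤ ⟪lam - ρ, α⟫)
    (m : E) :
    ‖(2:ℝ)⁻¹ • ∑ α ∈ (Δ.filter (fun α => 0 < ⟪α, v⟫)).filter (fun α => ⟪α, m⟫ = 0), α‖ ^ 2 ≤
      ‖lam - m‖ ^ 2 := by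
  classical
  have hmi := mag_inner_aux Δ hΔ0 hΔrefl v hv ρ hρ lam hlam m
  set S := (Δ.filter (fun α => 0 < ⟪α, v⟫)).filter (fun α => ⟪α, m⟫ = 0) with hS
  set rm : E := (2:ℝ)⁻¹ • ∑ α ∈ S, α with hrm
  have hm0 : ⟪m, rm⟫ = 0 := by
    rw [hrm, real_inner_smul_right, inner_sum]
    rw [Finset.sum_eq_zero, mul_zero]
    intro α hα
    rw [real_inner_comm]
    exact (Finset.mem_filter.mp hα).2
  have h0 : (0:ℝ) ≤ ‖lam - m - rm‖ ^ 2 := by positivity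
  rw [norm_sub_sq_real (lam - m) rm] at h0
  have hlm : ⟪lam - m, rm⟫ = ⟪lam, rm⟫ - ⟪m, rm⟫ := inner_sub_left lam m rm
  rw [hlm, hm0, sub_zero] at h0
  linarith

end Mag

open MagicalAux

theorem magical_equality_first
    {E : Type*} [NormedAddCommGroup E] [InnerProductSpace ℝ E] [FiniteDimensional ℝ E]
    (Δ : Finset E)
    (hΔ0 : (0 : E) ∉ Δ)
    (hΔred : ∀ α ∈ Δ, ∀ t : ℝ, t • α ∈ Δ → t = 1 ∨ t = -1)
    (hΔrefl : ∀ α ∈ Δ, ∀ β ∈ Δ, β - (2 * ⟪β, α⟫ / ⟪α, α⟫) • α ∈ Δ)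
    (hΔcrys : ∀ α ∈ Δ, ∀ β ∈ Δ, ∃ n : ℤ, 2 * ⟪β, α⟫ / ⟪α, α⟫ = (n : ℝ))
    (v : E) (hv : ∀ α ∈ Δ, ⟪α, v⟫ ≠ 0)
    (Δpos : Finset E) (hΔpos : Δpos = Δ.filter (fun α => 0 < ⟪α, v⟫))
    (ρ : E) (hρ : ρ = (2 : ℝ)⁻¹ • ∑ α ∈ Δpos, α)    (lam μ : E)
    (hlam : ∀ α ∈ Δpos, 0 ≤ ⟪lam - ρ, α⟫)
    (ρμ : E) (hρμ : ρμ = (2 : ℝ)⁻¹ • ∑ α ∈ Δpos.filter (fun α => ⟪α, μ⟫ = 0), α)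
    (ρlam : E) (hρlam : ρlam = (2 : ℝ)⁻¹ • ∑ α ∈ Δ.filter (fun α => 0 < ⟪α, lam⟫), α)
    (ρμD : E) (hρμD : ρμD = (2 : ℝ)⁻¹ • ∑ α ∈ Δ.filter (fun α => 0 < ⟪α, μ⟫), α)
    (heq : ‖lam - μ‖ ^ 2 = (2 : ℝ)⁻¹ * ∑ α ∈ Δpos.filter (fun α => ⟪α, μ⟫ = 0), ⟪lam, α⟫) :
    (∀ α ∈ Δpos, 0 ≤ ⟪μ, α⟫) ∧ lam = μ + ρμ ∧ lam - ρlam = μ - ρμD ∧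
      (2 : ℝ)⁻¹ * ∑ α ∈ Δpos.filter (fun α => ⟪α, μ⟫ = 0), ⟪lam, α⟫ = ‖ρμ‖ ^ 2 := by
  classical
  subst hΔpos
  have hR0 : ∀ δ ∈ Δ, δ ≠ (0:E) := fun δ hδ h => hΔ0 (h ▸ hδ)
  have hcl : ∀ b ∈ Δ, ∀ x ∈ Δ, sr b x ∈ Δ := fun b hb x hx => hΔrefl b hb x hx
  have hnegΔ : ∀ x ∈ Δ, -x ∈ Δ := by
    intro x hx
    have := hcl x hx x hx
    rwa [sr_self x (hR0 x hx)] at this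
  have hlampos : ∀ β ∈ Δ.filter (fun α => 0 < ⟪α, v⟫), 0 < ⟪lam, β⟫ :=
    fun β hβ => (lam_pos_aux Δ hΔ0 hΔrefl v hv ρ hρ lam hlam β hβ).1
  -- the equality case at μ
  have hinner_eq : ‖lam - μ‖ ^ 2 = ⟪lam, ρμ⟫ := by
    rw [heq, hρμ, real_inner_smul_right, inner_sum]
  have hμρμ : ⟪μ, ρμ⟫ = 0 := by
    rw [hρμ, real_inner_smul_right, inner_sum, Finset.sum_eq_zero, mul_zero]
    intro α hα
    rw [real_inner_comm]
    exact (Finset.mem_filter.mp hα).2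
  have hmi : ‖ρμ‖ ^ 2 ≤ ⟪lam, ρμ⟫ := by
    have := mag_inner_aux Δ hΔ0 hΔrefl v hv ρ hρ lam hlam μ
    rwa [← hρμ] at this
  have hnormz : ‖lam - μ - ρμ‖ ^ 2 = ‖ρμ‖ ^ 2 - ⟪lam, ρμ⟫ := by
    rw [norm_sub_sq_real (lam - μ) ρμ, inner_sub_left, hμρμ, sub_zero, hinner_eq]
    ring
  have hz : lam - μ - ρμ = 0 := by
    have h0 : ‖lam - μ - ρμ‖ ^ 2 = 0 := le_antisymm (by linarith) (by positivity)
    have h1 : ‖lam - μ - ρμ‖ = 0 := by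
      nlinarith [norm_nonneg (lam - μ - ρμ)]
    exact norm_eq_zero.mp h1
  have hlamμ : lam = μ + ρμ := by
    have h2 : lam - μ = ρμ := by
      have := hz; rw [sub_eq_zero] at this; exact this
    rw [← h2]; abel
  have hlmρμ : lam - μ = ρμ := by rw [hlamμ]; abel
  have hconc4 : (2 : ℝ)⁻¹ * ∑ α ∈ (Δ.filter (fun α => 0 < ⟪α, v⟫)).filter
      (fun α => ⟪α, μ⟫ = 0), ⟪lam, α⟫ = ‖ρμ‖ ^ 2 := by
    rw [← heq, hlmρμ]
  -- dominance of μ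
  have hμdom : ∀ β ∈ Δ.filter (fun α => 0 < ⟪α, v⟫), 0 ≤ ⟪μ, β⟫ := by
    intro β hβ
    obtain ⟨hβΔ, hβv⟩ := Finset.mem_filter.mp hβ
    have hβne : β ≠ 0 := hR0 β hβΔ
    have hββ : (0:ℝ) < ⟪β, β⟫ := by
      rw [real_inner_self_eq_norm_sq]; exact pow_pos (norm_pos_iff.mpr hβne) 2
    set m' : E := sr β μ with hm'def
    have hm'inv : sr β m' = μ := sr_invol β hβne μ
    set R : Finset E := Δ.filter (fun δ => ⟪δ, m'⟫ = 0) with hRdef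
    have hRsub : R ⊆ Δ := Finset.filter_subset _ _
    have hclR : ∀ b ∈ R, ∀ x ∈ R, sr b x ∈ R := by
      intro b hb x hx
      obtain ⟨hbΔ, hbm⟩ := Finset.mem_filter.mp hb
      obtain ⟨hxΔ, hxm⟩ := Finset.mem_filter.mp hx
      refine Finset.mem_filter.mpr ⟨hcl b hbΔ x hxΔ, ?_⟩
      rw [sr_apply, inner_sub_left, real_inner_smul_left, hbm, hxm]
      ring
    have hu2 : ∀ δ ∈ R, ⟪δ, v⟫ ≠ 0 := fun δ hδ => hv δ (hRsub hδ)
    have hu1 : ∀ δ ∈ R, ⟪δ, sr β v⟫ ≠ 0 := by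
      intro δ hδ
      rw [← sr_adj]
      exact hv _ (hcl β hβΔ δ (hRsub hδ))
    have hnormeq := rho_norm_eq Δ hΔ0 hΔred hΔcrys
      ((R.filter fun δ => 0 < ⟪δ, sr β v⟫) \ (R.filter fun δ => 0 < ⟪δ, v⟫)).card
      R hRsub hclR (sr β v) v hu1 hu2 rfl
    -- identify the u1-positive system with the sr β image of the μ-system
    have hbij : ∑ δ ∈ R.filter (fun δ => 0 < ⟪δ, sr β v⟫), δ =
        sr β (∑ α ∈ (Δ.filter (fun α => 0 < ⟪α, v⟫)).filter (fun α => ⟪α, μ⟫ = 0), α) := by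
      rw [sr_sum]
      refine Finset.sum_bij' (fun δ _ => sr β δ) (fun α _ => sr β α) ?_ ?_ ?_ ?_ ?_
      · intro δ hδ
        obtain ⟨hδR, hδu1⟩ := Finset.mem_filter.mp hδ
        obtain ⟨hδΔ, hδm⟩ := Finset.mem_filter.mp hδR
        refine Finset.mem_filter.mpr ⟨Finset.mem_filter.mpr ⟨hcl β hβΔ δ hδΔ, ?_⟩, ?_⟩
        · show (0:ℝ) < ⟪sr β δ, v⟫
          rwa [← sr_adj] at hδu1
        · show ⟪sr β δ, μ⟫ = 0
          rw [show μ = sr β m' from hm'inv.symm, sr_inner β hβne]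
          exact hδm
      · intro α hα
        obtain ⟨hαP, hαμ⟩ := Finset.mem_filter.mp hα
        obtain ⟨hαΔ, hαv⟩ := Finset.mem_filter.mp hαP
        refine Finset.mem_filter.mpr ⟨Finset.mem_filter.mpr ⟨hcl β hβΔ α hαΔ, ?_⟩, ?_⟩
        · show ⟪sr β α, m'⟫ = 0
          rw [hm'def, sr_inner β hβne]
          exact hαμ
        · show (0:ℝ) < ⟪sr β α, sr β v⟫
          rw [sr_inner β hβne]
          exact hαv
      · intro δ hδ
        exact sr_invol β hβne δ
      · intro α hα
        exact sr_invol β hβne α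
      · intro δ hδ
        exact (sr_invol β hβne δ).symm
    have hfc : R.filter (fun δ => 0 < ⟪δ, v⟫) =
        (Δ.filter (fun α => 0 < ⟪α, v⟫)).filter (fun α => ⟪α, m'⟫ = 0) := by
      rw [hRdef, Finset.filter_comm]
    have hsumnorm : ‖∑ α ∈ (Δ.filter (fun α => 0 < ⟪α, v⟫)).filter (fun α => ⟪α, m'⟫ = 0), α‖ =
        ‖∑ α ∈ (Δ.filter (fun α => 0 < ⟪α, v⟫)).filter (fun α => ⟪α, μ⟫ = 0), α‖ := by
      rw [← hfc, ← hnormeq, hbij, sr_norm β hβne]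
    -- the magical inequality at m'
    have hmg := mag_ge_aux Δ hΔ0 hΔrefl v hv ρ hρ lam hlam m'
    have hρμnorm : ‖(2:ℝ)⁻¹ • ∑ α ∈ (Δ.filter (fun α => 0 < ⟪α, v⟫)).filter
        (fun α => ⟪α, m'⟫ = 0), α‖ = ‖ρμ‖ := by
      rw [hρμ, norm_smul, norm_smul, hsumnorm]
    rw [hρμnorm] at hmg
    -- ‖lam - μ‖² = ‖ρμ‖² ≤ ‖lam - m'‖²
    have hlhs : ‖lam - μ‖ ^ 2 = ‖ρμ‖ ^ 2 := by rw [hlmρμ]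
    have hcmp : ‖lam - μ‖ ^ 2 ≤ ‖lam - m'‖ ^ 2 := by rw [hlhs]; exact hmg
    rw [norm_sub_sq_real lam μ, norm_sub_sq_real lam m'] at hcmp
    have hm'norm : ‖m'‖ = ‖μ‖ := sr_norm β hβne μ
    rw [hm'norm] at hcmp
    -- hence ⟪lam, m'⟫ ≤ ⟪lam, μ⟫
    have hlm' : ⟪lam, m'⟫ = ⟪lam, μ⟫ - 2 * ⟪μ, β⟫ / ⟪β, β⟫ * ⟪lam, β⟫ := by
      rw [hm'def, sr_apply, inner_sub_right, real_inner_smul_right]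
    rw [hlm'] at hcmp
    have hlamβ : 0 < ⟪lam, β⟫ := hlampos β hβ
    have hcnonneg : 0 ≤ 2 * ⟪μ, β⟫ / ⟪β, β⟫ := by
      by_contra hneg
      push_neg at hneg
      nlinarith
    have h2 : 0 ≤ 2 * ⟪μ, β⟫ := by
      by_contra hneg
      push_neg at hneg
      have : 2 * ⟪μ, β⟫ / ⟪β, β⟫ < 0 := div_neg_of_neg_of_pos hneg hββ
      linarith
    linarith
  -- conclusion 3
  have hρlam_eq : ρlam = ρ := by
    have hset : Δ.filter (fun α => 0 < ⟪α, lam⟫) = Δ.filter (fun α => 0 < ⟪α, v⟫) := by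
      ext α
      simp only [Finset.mem_filter]
      constructor
      · rintro ⟨hαΔ, hαlam⟩
        refine ⟨hαΔ, ?_⟩
        by_contra hnot
        have hnα : -α ∈ Δ.filter (fun α => 0 < ⟪α, v⟫) := by
          refine Finset.mem_filter.mpr ⟨hnegΔ α hαΔ, ?_⟩
          rw [inner_neg_left]
          rcases lt_or_gt_of_ne (hv α hαΔ) with h | h
          · linarith
          · exact absurd h hnot
        have := hlampos (-α) hnα
        rw [inner_neg_right] at this
        rw [real_inner_comm] at hαlam
        linarith
      · rintro ⟨hαΔ, hαv⟩
        have := hlampos α (Finset.mem_filter.mpr ⟨hαΔ, hαv⟩)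
        rw [real_inner_comm] at this
        exact ⟨hαΔ, this⟩
    rw [hρlam, hρ, hset]
  have hρμD_eq : ρμD = ρ - ρμ := by
    rw [hρμD, hρ, hρμ, ← smul_sub]
    congr 1
    have hsplit : (∑ γ ∈ (Δ.filter (fun α => 0 < ⟪α, v⟫)).filter (fun α => ⟪α, μ⟫ = 0), γ) +
        ∑ γ ∈ (Δ.filter (fun α => 0 < ⟪α, v⟫)).filter (fun α => ¬ ⟪α, μ⟫ = 0), γ =
        ∑ γ ∈ Δ.filter (fun α => 0 < ⟪α, v⟫), γ :=
      Finset.sum_filter_add_sum_filter_not _ _ _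
    have hQeq : Δ.filter (fun α => 0 < ⟪α, μ⟫) =
        (Δ.filter (fun α => 0 < ⟪α, v⟫)).filter (fun α => ¬ ⟪α, μ⟫ = 0) := by
      ext α
      simp only [Finset.mem_filter]
      constructor
      · rintro ⟨hαΔ, hαμ⟩
        have hαv : 0 < ⟪α, v⟫ := by
          by_contra hnot
          have hnα : -α ∈ Δ.filter (fun α => 0 < ⟪α, v⟫) := by
            refine Finset.mem_filter.mpr ⟨hnegΔ α hαΔ, ?_⟩
            rw [inner_neg_left]
            rcases lt_or_gt_of_ne (hv α hαΔ) with h | h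
            · linarith
            · exact absurd h hnot
          have := hμdom (-α) hnα
          rw [inner_neg_right, real_inner_comm] at this
          linarith
        exact ⟨⟨hαΔ, hαv⟩, by linarith⟩
      · rintro ⟨⟨hαΔ, hαv⟩, hαμ⟩
        have := hμdom α (Finset.mem_filter.mpr ⟨hαΔ, hαv⟩)
        rw [real_inner_comm] at this
        rcases lt_or_eq_of_le this with h | h
        · exact ⟨hαΔ, h⟩
        · exact absurd h.symm hαμ
    rw [hQeq, ← hsplit]
    abel
  refine ⟨hμdom, hlamμ, ?_, hconc4⟩
  rw [hlamμ, hρlam_eq, hρμD_eq]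
  abel
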